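/- arXiv:2412.19377 — 3 statements merged into one kernel-verified Lean document; each statement's English description precedes it below -/
import Mathlib

section
/- For the double well potential drift b(x) = -|x|²x + x on ℝᵈ, for all x, y ∈ ℝᵈ, ⟨x - y, b(x) - b(y)⟩ ≤ (1 - (1/6)(|x|² + |y|²))|x - y|². -/
theorem stmt_2 (d : ℕ) (hd : 1 ≤ d)
    (b : EuclideanSpace ℝ (Fin d) → EuclideanSpace ℝ (Fin d))
    (hb : ∀ x, b x = -(‖x‖^2) • x + x) :
    ∀ x y : EuclideanSpace ℝ (Fin d),
      (inner ℝ (x - y) (b x - b y) : ℝ) ≤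
        (1 - (1/6) * (‖x‖^2 + ‖y‖^2)) * ‖x - y‖^2 := by
  intro x y
  rw [hb, hb]
  have hxy : ‖x - y‖^2 = ‖x‖^2 + ‖y‖^2 - 2 * (inner ℝ x y : ℝ) := by
    rw [@norm_sub_sq_real]; ring
  have hexp : (inner ℝ (x - y) ((-(‖x‖^2) • x + x) - (-(‖y‖^2) • y + y)) : ℝ)
      = ‖x - y‖^2 - (‖x‖^2 * ‖x‖^2 + ‖y‖^2 * ‖y‖^2
          - (‖x‖^2 + ‖y‖^2) * (inner ℝ x y : ℝ)) := by
    simp only [inner_sub_left, inner_sub_right, inner_add_right, inner_smul_right,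
      real_inner_self_eq_norm_sq]
    rw [hxy, real_inner_comm y x]
    ring
  rw [hexp, hxy]
  nlinarith [sq_nonneg (‖x - y‖), sq_nonneg (‖x‖^2 - ‖y‖^2), sq_nonneg ‖x‖, sq_nonneg ‖y‖,
    sq_nonneg (‖x‖ - ‖y‖), sq_nonneg (‖x‖ + ‖y‖)]
end

section
/- For the double well potential drift b(x) = -|x|²x + x on ℝᵈ, for all x, y ∈ ℝᵈ, ⟨x - y, b(x)|y|² - b(y)|x|²⟩ ≤ ((1/2)|x|² + (5/2)|y|²)|x - y|² - |x|²|y|²|x - y|². -/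
theorem stmt_3 (d : ℕ) (hd : 1 ≤ d)
    (b : EuclideanSpace ℝ (Fin d) → EuclideanSpace ℝ (Fin d))
    (hb : ∀ x, b x = -(‖x‖^2) • x + x) :
    ∀ x y : EuclideanSpace ℝ (Fin d),
      (inner ℝ (x - y) (‖y‖^2 • b x - ‖x‖^2 • b y) : ℝ) ≤
        ((1/2) * ‖x‖^2 + (5/2) * ‖y‖^2) * ‖x - y‖^2
          - ‖x‖^2 * ‖y‖^2 * ‖x - y‖^2 := by
  intro x y
  have hxy : ‖x - y‖^2 = ‖x‖^2 - 2 * inner ℝ x y + ‖y‖^2 := norm_sub_sq_real x y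
  have hcs : (inner ℝ x y : ℝ) ≤ ‖x‖ * ‖y‖ := real_inner_le_norm x y
  have hyx : (inner ℝ y x : ℝ) = inner ℝ x y := real_inner_comm x y
  have hx : (0:ℝ) ≤ ‖x‖ := norm_nonneg x
  have hy : (0:ℝ) ≤ ‖y‖ := norm_nonneg y
  rw [hb, hb]
  simp only [inner_sub_right, inner_add_right, real_inner_smul_right, inner_sub_left,
    real_inner_self_eq_norm_sq, hyx]
  rw [hxy]
  nlinarith [mul_nonneg (sq_nonneg (‖x‖ - ‖y‖)) (by nlinarith : (0:ℝ) ≤ ‖x‖^2 + 2*(‖x‖*‖y‖) + 5*‖y‖^2),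
    mul_nonneg (sq_nonneg ‖y‖) (sub_nonneg.2 hcs)]
end

section
/- Suppose b : ℝᵈ → ℝᵈ and φ : [0,∞) → [0,∞) satisfy: there are L₃, L₄, L₅ > 0 and R ≥ 0 such that for all x, y ∈ ℝᵈ with x ∉ B_R or y ∉ B_R, ⟨x - y, b(x) - b(y)⟩ ≤ -L₃(1 + φ(|x|) + φ(|y|))|x - y|² and ⟨x - y, b(x)φ(|y|) - b(y)φ(|x|)⟩ ≤ (L₄(1 + φ(|x|) + φ(|y|)) - L₅ φ(|x|)φ(|y|))|x - y|². Let θ ∈ (0,1/2) and δ ∈ (0, δ₀] with δ₀ = (L₃/(2L₄))^(1/θ) ∧ 1, and define b^(δ)(x) = b(x)/(1 + δ^θ φ(|x|)). Then for all x, y with x ∉ B_R or y ∉ B_R, ⟨x - y, b^(δ)(x) - b^(δ)(y)⟩ ≤ -((L₃/2) ∧ L₅)|x - y|². -/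
theorem stmt_8 (d : ℕ) (hd : 1 ≤ d)
    (b : EuclideanSpace ℝ (Fin d) → EuclideanSpace ℝ (Fin d))
    (φ : ℝ → ℝ)
    (hφnonneg : ∀ r, 0 ≤ r → 0 ≤ φ r)
    (L₃ L₄ L₅ : ℝ) (hL₃ : 0 < L₃) (hL₄ : 0 < L₄) (hL₅ : 0 < L₅)
    (R : ℝ) (hR : 0 ≤ R)
    (h1 : ∀ x y : EuclideanSpace ℝ (Fin d),
      (x ∉ Metric.closedBall (0 : EuclideanSpace ℝ (Fin d)) R ∨
        y ∉ Metric.closedBall (0 : EuclideanSpace ℝ (Fin d)) R) →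
      (inner ℝ (x - y) (b x - b y) : ℝ) ≤
        -L₃ * (1 + φ ‖x‖ + φ ‖y‖) * ‖x - y‖^2)
    (h2 : ∀ x y : EuclideanSpace ℝ (Fin d),
      (x ∉ Metric.closedBall (0 : EuclideanSpace ℝ (Fin d)) R ∨
        y ∉ Metric.closedBall (0 : EuclideanSpace ℝ (Fin d)) R) →
      (inner ℝ (x - y) (φ ‖y‖ • b x - φ ‖x‖ • b y) : ℝ) ≤
        (L₄ * (1 + φ ‖x‖ + φ ‖y‖) - L₅ * (φ ‖x‖ * φ ‖y‖)) * ‖x - y‖^2)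
    (θ : ℝ) (hθ : θ ∈ Set.Ioo (0:ℝ) (1/2))
    (δ : ℝ) (hδ : δ ∈ Set.Ioc (0:ℝ) (min ((L₃ / (2 * L₄)) ^ (1/θ)) 1))
    (bδ : EuclideanSpace ℝ (Fin d) → EuclideanSpace ℝ (Fin d))
    (hbδ : ∀ x, bδ x = (1 + δ ^ θ * φ ‖x‖)⁻¹ • b x) :
    ∀ x y : EuclideanSpace ℝ (Fin d),
      (x ∉ Metric.closedBall (0 : EuclideanSpace ℝ (Fin d)) R ∨
        y ∉ Metric.closedBall (0 : EuclideanSpace ℝ (Fin d)) R) →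
      (inner ℝ (x - y) (bδ x - bδ y) : ℝ) ≤
        -(min (L₃ / 2) L₅) * ‖x - y‖^2 := by
  intro x y hxy
  have hφx : 0 ≤ φ ‖x‖ := hφnonneg _ (norm_nonneg x)
  have hφy : 0 ≤ φ ‖y‖ := hφnonneg _ (norm_nonneg y)
  set s : ℝ := δ ^ θ with hs
  have hs0 : 0 < s := Real.rpow_pos_of_pos hδ.1 θ
  have hs1 : s ≤ 1 :=
    Real.rpow_le_one hδ.1.le (le_trans hδ.2 (min_le_right _ _)) hθ.1.le
  have hsL : s * L₄ ≤ L₃ / 2 := by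
    have hc : (0:ℝ) ≤ L₃ / (2 * L₄) := by positivity
    have hsc : s ≤ L₃ / (2 * L₄) := by
      calc s ≤ ((L₃ / (2 * L₄)) ^ (1/θ)) ^ θ :=
            Real.rpow_le_rpow hδ.1.le (le_trans hδ.2 (min_le_left _ _)) hθ.1.le
        _ = (L₃ / (2 * L₄)) ^ ((1/θ) * θ) := (Real.rpow_mul hc _ _).symm
        _ = L₃ / (2 * L₄) := by
            rw [one_div, inv_mul_cancel₀ (ne_of_gt hθ.1), Real.rpow_one]
    calc s * L₄ ≤ (L₃ / (2 * L₄)) * L₄ := by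
          exact mul_le_mul_of_nonneg_right hsc hL₄.le
      _ = L₃ / 2 := by field_simp
  have h1' := h1 x y hxy
  have h2' := h2 x y hxy
  set φx := φ ‖x‖ with hφxdef
  set φy := φ ‖y‖ with hφydef
  set A : ℝ := 1 + s * φx with hA
  set B : ℝ := 1 + s * φy with hB
  have hA0 : 0 < A := by positivity
  have hB0 : 0 < B := by positivity
  have key : (inner ℝ (x - y) (bδ x - bδ y) : ℝ) =
      (A * B)⁻¹ * ((inner ℝ (x - y) (b x - b y) : ℝ)
        + s * (inner ℝ (x - y) (φy • b x - φx • b y) : ℝ)) := by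
    rw [hbδ, hbδ]
    simp only [inner_sub_right, real_inner_smul_right]
    rw [hA, hB, hφxdef, hφydef]
    have hAx : (1 + s * φ ‖x‖) ≠ 0 := hA0.ne'
    have hBy : (1 + s * φ ‖y‖) ≠ 0 := hB0.ne'
    field_simp
    ring
  rw [key]
  set P : ℝ := (inner ℝ (x - y) (b x - b y) : ℝ) with hP
  set Q : ℝ := (inner ℝ (x - y) (φy • b x - φx • b y) : ℝ) with hQ
  set N : ℝ := ‖x - y‖^2 with hN
  have hN0 : 0 ≤ N := by positivity
  set m : ℝ := min (L₃ / 2) L₅ with hm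
  have hm1 : m ≤ L₃ / 2 := min_le_left _ _
  have hm2 : m ≤ L₅ := min_le_right _ _
  have hm0 : 0 < m := lt_min (by linarith) hL₅
  clear_value P Q N m φx φy s
  clear key hbδ h1 h2 hs hm hN hP hQ hφxdef hφydef
  rw [hA, hB]
  clear hA hB hA0 hB0
  clear A B
  rw [inv_mul_eq_div, div_le_iff₀ (by positivity)]
  have hPQ : P + s * Q ≤ -L₃ * (1 + φx + φy) * N
      + s * ((L₄ * (1 + φx + φy) - L₅ * (φx * φy)) * N) := by
    have := mul_le_mul_of_nonneg_left h2' hs0.le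
    linarith
  have hms : m * s ≤ L₅ := by nlinarith
  have e1 : m * (1 + s * (φx + φy)) ≤ (L₃ / 2) * (1 + φx + φy) := by
    nlinarith [mul_nonneg (sub_nonneg.2 hm1) (add_nonneg hφx hφy),
      mul_nonneg (mul_nonneg hm0.le (sub_nonneg.2 hs1)) (add_nonneg hφx hφy)]
  have e2 : m * (s * s * (φx * φy)) ≤ s * L₅ * (φx * φy) := by
    nlinarith [mul_nonneg (mul_nonneg hs0.le (sub_nonneg.2 hms)) (mul_nonneg hφx hφy)]
  have key2 : m * ((1 + s * φx) * (1 + s * φy))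
      ≤ (L₃ / 2) * (1 + φx + φy) + s * L₅ * (φx * φy) := by nlinarith
  have hL3s : s * L₄ * (1 + φx + φy) ≤ (L₃ / 2) * (1 + φx + φy) := by
    exact mul_le_mul_of_nonneg_right hsL (by linarith)
  have k2N := mul_le_mul_of_nonneg_right key2 hN0
  have k3N := mul_le_mul_of_nonneg_right hL3s hN0
  linarith [k2N, k3N, hPQ]
end
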